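/- Let p be a prime and a a positive integer, let A be the adjacency matrix of the modified divisor prime graph G*_Dp(p^a), and let μ = 1/(a+1). If B is a positive semidefinite real matrix with B² = (A − μI)², then for every i with 1 ≤ i ≤ a, the diagonal entry of B at the vertex p^i equals (2a² + 2a + 1)/(a(a+1)√(4a+1)) + (a−1)/(a(a+1)). -/

import Mathlib

open Finset Matrix

/-- Structured matrix on the divisors of `p ^ a`: entry `(u,v)` is `α` if both are `1`,
`β` if exactly one is `1`, `γ` on the remaining diagonal, `δ` elsewhere. -/
private def MtAux (p a : ℕ) (α β γ δ : ℝ) :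
    Matrix {d : ℕ // d ∈ (p ^ a).divisors} {d : ℕ // d ∈ (p ^ a).divisors} ℝ :=
  fun u v =>
    if u.1 = 1 then (if v.1 = 1 then α else β)
    else if v.1 = 1 then β else if u = v then γ else δ

private lemma card_divisors_pp {p a : ℕ} (hp : p.Prime) :
    Fintype.card {d : ℕ // d ∈ (p ^ a).divisors} = a + 1 := by
  rw [Fintype.card_coe, Nat.divisors_prime_pow hp, Finset.card_map, Finset.card_range]

private lemma one_mem_pp {p a : ℕ} (hp : p.Prime) : (1 : ℕ) ∈ (p ^ a).divisors :=
  Nat.one_mem_divisors.mpr (pow_ne_zero _ hp.ne_zero)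

private lemma gcd_ne_one_pp {p a : ℕ} (hp : p.Prime) {u v : ℕ}
    (hu : u ∈ (p ^ a).divisors) (hv : v ∈ (p ^ a).divisors)
    (hu1 : u ≠ 1) (hv1 : v ≠ 1) : Nat.gcd u v ≠ 1 := by
  have hud : u ∣ p ^ a := (Nat.mem_divisors.mp hu).1
  have hvd : v ∣ p ^ a := (Nat.mem_divisors.mp hv).1
  obtain ⟨k, hk, rfl⟩ := (Nat.dvd_prime_pow hp).mp hud
  obtain ⟨l, hl, rfl⟩ := (Nat.dvd_prime_pow hp).mp hvd
  have hk0 : k ≠ 0 := by rintro rfl; simp at hu1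
  have hl0 : l ≠ 0 := by rintro rfl; simp at hv1
  have hpd : p ∣ Nat.gcd (p ^ k) (p ^ l) :=
    Nat.dvd_gcd (dvd_pow_self p hk0) (dvd_pow_self p hl0)
  intro h
  rw [h] at hpd
  exact hp.one_lt.ne' (Nat.eq_one_of_dvd_one hpd)

section Erase

variable {p a : ℕ}

private lemma erase_card_pp (hp : p.Prime)
    (o : {d : ℕ // d ∈ (p ^ a).divisors}) :
    (Finset.univ.erase o).card = a := by
  rw [Finset.card_erase_of_mem (Finset.mem_univ _), Finset.card_univ, card_divisors_pp hp]
  simp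

private lemma mem_erase_ne_one (h1 : (1 : ℕ) ∈ (p ^ a).divisors)
    {w : {d : ℕ // d ∈ (p ^ a).divisors}}
    (hw : w ∈ Finset.univ.erase (⟨1, h1⟩ : {d : ℕ // d ∈ (p ^ a).divisors})) :
    w.1 ≠ 1 := by
  intro h
  exact (Finset.mem_erase.mp hw).1 (Subtype.ext h)

end Erase

private lemma MtAux_sq {p a : ℕ} (hp : p.Prime) (ha : 0 < a) (α β γ δ : ℝ) :
    (MtAux p a α β γ δ) ^ 2 =
      MtAux p a (α ^ 2 + (a : ℝ) * β ^ 2)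
        (α * β + β * γ + ((a : ℝ) - 1) * (β * δ))
        (β ^ 2 + γ ^ 2 + ((a : ℝ) - 1) * δ ^ 2)
        (β ^ 2 + 2 * (γ * δ) + ((a : ℝ) - 2) * δ ^ 2) := by
  have h1 : (1 : ℕ) ∈ (p ^ a).divisors := one_mem_pp hp
  set ι := {d : ℕ // d ∈ (p ^ a).divisors}
  set o : ι := ⟨1, h1⟩ with ho
  have ho1 : o.1 = 1 := rfl
  have hE : (Finset.univ.erase o).card = a := erase_card_pp hp o
  ext u v
  rw [pow_two, Matrix.mul_apply]
  rw [← Finset.add_sum_erase Finset.univ _ (Finset.mem_univ o)]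
  by_cases hu : u.1 = 1 <;> by_cases hv : v.1 = 1
  · -- u = o, v = o
    have hu' : u = o := Subtype.ext hu
    have hv' : v = o := Subtype.ext hv
    subst hu' hv'
    rw [Finset.sum_congr rfl (fun w hw => by
      have hw1 : w.1 ≠ 1 := mem_erase_ne_one h1 hw
      simp [MtAux, ho1, hw1] : ∀ w ∈ Finset.univ.erase o, _ = β * β)]
    rw [Finset.sum_const, hE]
    simp [MtAux, ho1]
    ring
  · -- u = o, v ≠ o
    have hu' : u = o := Subtype.ext hu
    subst hu'
    have hvE : v ∈ Finset.univ.erase o := by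
      refine Finset.mem_erase.mpr ⟨fun h => hv (by rw [h]), Finset.mem_univ _⟩
    rw [← Finset.add_sum_erase _ _ hvE]
    rw [Finset.sum_congr rfl (fun w hw => by
      have hw1 : w.1 ≠ 1 := mem_erase_ne_one h1 (Finset.mem_of_mem_erase hw)
      have hwv : w ≠ v := (Finset.mem_erase.mp hw).1
      simp [MtAux, ho1, hw1, hv, hwv] : ∀ w ∈ (Finset.univ.erase o).erase v, _ = β * δ)]
    rw [Finset.sum_const, Finset.card_erase_of_mem hvE, hE]
    have hcast : ((a - 1 : ℕ) : ℝ) = (a : ℝ) - 1 := by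
      rw [Nat.cast_sub ha]; simp
    simp [MtAux, ho1, hv, hcast]
    ring
  · -- u ≠ o, v = o
    have hv' : v = o := Subtype.ext hv
    subst hv'
    have huE : u ∈ Finset.univ.erase o := by
      refine Finset.mem_erase.mpr ⟨fun h => hu (by rw [h]), Finset.mem_univ _⟩
    rw [← Finset.add_sum_erase _ _ huE]
    rw [Finset.sum_congr rfl (fun w hw => by
      have hw1 : w.1 ≠ 1 := mem_erase_ne_one h1 (Finset.mem_of_mem_erase hw)
      have hwu : u ≠ w := fun h => (Finset.mem_erase.mp hw).1 h.symm
      simp [MtAux, ho1, hw1, hu, hwu] : ∀ w ∈ (Finset.univ.erase o).erase u, _ = δ * β)]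
    rw [Finset.sum_const, Finset.card_erase_of_mem huE, hE]
    have hcast : ((a - 1 : ℕ) : ℝ) = (a : ℝ) - 1 := by
      rw [Nat.cast_sub ha]; simp
    simp [MtAux, ho1, hu, hcast]
    ring
  · -- u ≠ o, v ≠ o
    have huE : u ∈ Finset.univ.erase o := by
      refine Finset.mem_erase.mpr ⟨fun h => hu (by rw [h]), Finset.mem_univ _⟩
    by_cases huv : u = v
    · subst huv
      rw [← Finset.add_sum_erase _ _ huE]
      rw [Finset.sum_congr rfl (fun w hw => by
        have hw1 : w.1 ≠ 1 := mem_erase_ne_one h1 (Finset.mem_of_mem_erase hw)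
        have hwu : u ≠ w := fun h => (Finset.mem_erase.mp hw).1 h.symm
        simp [MtAux, ho1, hw1, hu, hwu, Ne.symm hwu] :
          ∀ w ∈ (Finset.univ.erase o).erase u, _ = δ * δ)]
      rw [Finset.sum_const, Finset.card_erase_of_mem huE, hE]
      have hcast : ((a - 1 : ℕ) : ℝ) = (a : ℝ) - 1 := by
        rw [Nat.cast_sub ha]; simp
      simp [MtAux, ho1, hu, hcast]
      ring
    · have hvE : v ∈ (Finset.univ.erase o).erase u := by
        refine Finset.mem_erase.mpr ⟨fun h => huv (by rw [h]), ?_⟩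
        exact Finset.mem_erase.mpr ⟨fun h => hv (by rw [h]), Finset.mem_univ _⟩
      have ha2 : 2 ≤ a := by
        have : 1 < (Finset.univ.erase o).card :=
          Finset.one_lt_card.mpr ⟨u, huE, v, Finset.mem_of_mem_erase hvE,
            fun h => huv h⟩
        omega
      rw [← Finset.add_sum_erase _ _ huE, ← Finset.add_sum_erase _ _ hvE]
      rw [Finset.sum_congr rfl (fun w hw => by
        have hw1 : w.1 ≠ 1 := mem_erase_ne_one h1
          (Finset.mem_of_mem_erase (Finset.mem_of_mem_erase hw))
        have hwv : w ≠ v := (Finset.mem_erase.mp hw).1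
        have hwu : u ≠ w := fun h =>
          (Finset.mem_erase.mp (Finset.mem_of_mem_erase hw)).1 h.symm
        simp [MtAux, ho1, hw1, hu, hv, hwu, Ne.symm hwu, hwv] :
          ∀ w ∈ ((Finset.univ.erase o).erase u).erase v, _ = δ * δ)]
      rw [Finset.sum_const, Finset.card_erase_of_mem hvE,
        Finset.card_erase_of_mem huE, hE]
      have hcast : ((a - 1 - 1 : ℕ) : ℝ) = (a : ℝ) - 2 := by
        have : a - 1 - 1 = a - 2 := by omega
        rw [this, Nat.cast_sub ha2]; simp
      simp [MtAux, ho1, hu, hv, huv, Ne.symm huv, hcast]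
      ring

private lemma MtAux_isHermitian {p a : ℕ} (α β γ δ : ℝ) :
    (MtAux p a α β γ δ).IsHermitian := by
  unfold Matrix.IsHermitian
  ext u v
  simp only [Matrix.conjTranspose_apply, star_trivial, MtAux]
  by_cases hu : u.1 = 1 <;> by_cases hv : v.1 = 1 <;>
    simp [hu, hv]
  by_cases huv : u = v
  · simp [huv]
  · simp [huv, Ne.symm huv]


set_option maxHeartbeats 1000000 in
private theorem mtAux_psd_and_sq (p a : ℕ) (hp : p.Prime) (ha : 0 < a)
    (aR s α β γ δ : ℝ) (haR : aR = (a : ℝ)) (hs0 : 0 < s) (hs2 : s ^ 2 = 4 * aR + 1)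
    (hα : α = aR * (2 * aR + 3) / ((aR + 1) * s))
    (hβ : β = (aR - 1) / ((aR + 1) * s))
    (hγ : γ = (2 * aR ^ 2 + 2 * aR + 1) / (aR * (aR + 1) * s) + (aR - 1) / (aR * (aR + 1)))
    (hδ : δ = γ - 1 / (aR + 1)) :
    (MtAux p a α β γ δ).PosSemidef ∧
      (MtAux p a α β γ δ) ^ 2 =
        (MtAux p a (1 - 1 / (aR + 1)) 1 (-(1 / (aR + 1))) 0) ^ 2 := by
  have haR1 : (1 : ℝ) ≤ aR := by rw [haR]; exact_mod_cast ha
  have haR0 : (0 : ℝ) < aR := by linarith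
  have ha10 : (0 : ℝ) < aR + 1 := by linarith
  have hsne : s ≠ 0 := ne_of_gt hs0
  have hane : aR ≠ 0 := ne_of_gt haR0
  have ha1ne : aR + 1 ≠ 0 := ne_of_gt ha10
  have h1 : (1 : ℕ) ∈ (p ^ a).divisors := one_mem_pp hp
  constructor
  · -- positive semidefinite
    refine Matrix.PosSemidef.of_dotProduct_mulVec_nonneg (MtAux_isHermitian _ _ _ _) fun x => ?_
    classical
    set o : {d : ℕ // d ∈ (p ^ a).divisors} := ⟨1, h1⟩ with ho
    have ho1 : o.1 = 1 := rfl
    set E := Finset.univ.erase o with hEdef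
    have hE : E.card = a := erase_card_pp hp o
    set S := ∑ w ∈ E, x w with hSdef
    set Q := ∑ w ∈ E, (x w) ^ 2 with hQdef
    have hmv : ∀ u, (MtAux p a α β γ δ *ᵥ x) u =
        if u.1 = 1 then α * x o + β * S
        else β * x o + γ * x u + δ * (S - x u) := by
      intro u
      simp only [Matrix.mulVec, dotProduct]
      by_cases hu : u.1 = 1
      · have hu' : u = o := Subtype.ext hu
        subst hu'
        rw [← Finset.add_sum_erase Finset.univ _ (Finset.mem_univ o), ← hEdef]
        rw [Finset.sum_congr rfl (fun w hw => by
          have hw1 : w.1 ≠ 1 := mem_erase_ne_one h1 (hEdef ▸ hw)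
          simp [MtAux, ho1, hw1] :
            ∀ w ∈ E, MtAux p a α β γ δ o w * x w = β * x w)]
        rw [← Finset.mul_sum, ← hSdef, if_pos ho1]
        simp [MtAux, ho1]
      · have huE : u ∈ E := hEdef ▸
          Finset.mem_erase.mpr ⟨fun h => hu (by rw [h]), Finset.mem_univ _⟩
        rw [← Finset.add_sum_erase Finset.univ _ (Finset.mem_univ o), ← hEdef,
          ← Finset.add_sum_erase E _ huE]
        rw [Finset.sum_congr rfl (fun w hw => by
          have hw1 : w.1 ≠ 1 := mem_erase_ne_one h1 (Finset.mem_of_mem_erase (hEdef ▸ hw))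
          have hwu : u ≠ w := fun h => (Finset.mem_erase.mp hw).1 h.symm
          simp [MtAux, ho1, hw1, hu, hwu] :
            ∀ w ∈ E.erase u, MtAux p a α β γ δ u w * x w = δ * x w)]
        rw [← Finset.mul_sum, Finset.sum_erase_eq_sub huE, ← hSdef, if_neg hu]
        simp [MtAux, ho1, hu]
        ring
    have hdot : dotProduct (star x) (MtAux p a α β γ δ *ᵥ x)
        = α * (x o) ^ 2 + 2 * β * (x o) * S + δ * S ^ 2 + (γ - δ) * Q := by
      simp only [dotProduct, Pi.star_apply, star_trivial]
      rw [← Finset.add_sum_erase Finset.univ _ (Finset.mem_univ o), ← hEdef]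
      rw [Finset.sum_congr rfl (fun w hw => by
        have hw1 : w.1 ≠ 1 := mem_erase_ne_one h1 (hEdef ▸ hw)
        rw [hmv w, if_neg hw1] :
          ∀ w ∈ E, x w * (MtAux p a α β γ δ *ᵥ x) w
            = x w * (β * x o + γ * x w + δ * (S - x w)))]
      rw [hmv o, if_pos ho1]
      rw [Finset.sum_congr rfl (fun w _ => by ring :
        ∀ w ∈ E, x w * (β * x o + γ * x w + δ * (S - x w))
          = (β * x o + δ * S) * x w + (γ - δ) * (x w) ^ 2)]
      rw [Finset.sum_add_distrib, ← Finset.mul_sum, ← Finset.mul_sum, ← hSdef, ← hQdef]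
      ring
    rw [hdot]
    have hSQ : S ^ 2 ≤ aR * Q := by
      have h := sq_sum_le_card_mul_sum_sq (s := E) (f := x)
      rw [hE] at h
      rw [haR]
      exact h
    have hQ0 : (0 : ℝ) ≤ Q := Finset.sum_nonneg fun w _ => sq_nonneg _
    have key : 0 ≤ aR ^ 2 * (2 * aR + 3) * (x o) ^ 2 + 2 * aR * (aR - 1) * (x o) * S
        + (2 * aR ^ 2 + 2 * aR + 1) * S ^ 2 := by
      nlinarith [sq_nonneg (aR * (2 * aR + 3) * (x o) + (aR - 1) * S), sq_nonneg S,
        sq_nonneg (x o), haR1, sq_nonneg (aR * S), sq_nonneg (aR * x o)]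
    have hcval : δ + 1 / ((aR + 1) * aR) = (2 * aR ^ 2 + 2 * aR + 1) / (aR * (aR + 1) * s) := by
      rw [hδ, hγ]
      field_simp
      ring
    have hquad : 0 ≤ α * (x o) ^ 2 + 2 * β * (x o) * S + (δ + 1 / ((aR + 1) * aR)) * S ^ 2 := by
      have heq : α * (x o) ^ 2 + 2 * β * (x o) * S + (δ + 1 / ((aR + 1) * aR)) * S ^ 2
          = (aR ^ 2 * (2 * aR + 3) * (x o) ^ 2 + 2 * aR * (aR - 1) * (x o) * S
              + (2 * aR ^ 2 + 2 * aR + 1) * S ^ 2) / (aR * (aR + 1) * s) := by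
        rw [hcval, hα, hβ]
        field_simp
      rw [heq]
      exact div_nonneg key (by positivity)
    have h6 : 1 / ((aR + 1) * aR) * S ^ 2 ≤ (1 / (aR + 1)) * Q := by
      calc 1 / ((aR + 1) * aR) * S ^ 2 ≤ 1 / ((aR + 1) * aR) * (aR * Q) :=
            mul_le_mul_of_nonneg_left hSQ (by positivity)
        _ = (1 / (aR + 1)) * Q := by field_simp
    have hγδ : γ - δ = 1 / (aR + 1) := by rw [hδ]; ring
    rw [hγδ]
    nlinarith [hquad, h6]
  · -- squares agree
    subst hδ hγ hβ hα
    rw [MtAux_sq hp ha, MtAux_sq hp ha]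
    simp only [← haR]
    have E1 : (aR * (2 * aR + 3) / ((aR + 1) * s)) ^ 2
          + aR * ((aR - 1) / ((aR + 1) * s)) ^ 2
        = (1 - 1 / (aR + 1)) ^ 2 + aR * 1 ^ 2 := by
      field_simp
      linear_combination ((-1) * aR + (-3) * aR ^ 2 + (-1) * aR ^ 3) * hs2
    set c : ℝ := (2 * aR ^ 2 + 2 * aR + 1) / (aR * (aR + 1) * s) with hc
    set e : ℝ := (aR - 1) / (aR * (aR + 1)) with he
    have E2 : aR * (2 * aR + 3) / ((aR + 1) * s) * ((aR - 1) / ((aR + 1) * s))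
          + (aR - 1) / ((aR + 1) * s) * (c + e)
          + (aR - 1) * ((aR - 1) / ((aR + 1) * s) * (c + e - 1 / (aR + 1)))
        = (1 - 1 / (aR + 1)) * 1 + 1 * -(1 / (aR + 1)) + (aR - 1) * (1 * 0) := by
      rw [hc, he]
      field_simp
      linear_combination ((1) * aR + (-1) * aR ^ 3) * hs2
    have E3 : ((aR - 1) / ((aR + 1) * s)) ^ 2 + (c + e) ^ 2
          + (aR - 1) * (c + e - 1 / (aR + 1)) ^ 2
        = 1 ^ 2 + (-(1 / (aR + 1))) ^ 2 + (aR - 1) * 0 ^ 2 := by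
      rw [hc, he]
      field_simp
      linear_combination ((-1) * aR + (-1) * aR ^ 2 + (-2) * aR ^ 3 + (-1) * aR ^ 4) * hs2
    have E4 : ((aR - 1) / ((aR + 1) * s)) ^ 2
          + 2 * ((c + e) * (c + e - 1 / (aR + 1)))
          + (aR - 2) * (c + e - 1 / (aR + 1)) ^ 2
        = 1 ^ 2 + 2 * (-(1 / (aR + 1)) * 0) + (aR - 2) * 0 ^ 2 := by
      rw [hc, he]
      field_simp
      linear_combination ((-1) * aR + (-1) * aR ^ 2 + (-2) * aR ^ 3 + (-1) * aR ^ 4) * hs2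
    rw [E1, E2, E3, E4]

theorem vertexEnergy_pendant_modifiedDivisorPrimeGraph_primePow (p a : ℕ) (hp : p.Prime)
    (ha : 0 < a)
    (A B : Matrix {d : ℕ // d ∈ (p ^ a).divisors} {d : ℕ // d ∈ (p ^ a).divisors} ℝ)
    (hA : ∀ u v : {d : ℕ // d ∈ (p ^ a).divisors},
      A u v = if Nat.gcd u.1 v.1 = 1 then 1 else 0)
    (hB : B.PosSemidef)
    (hBsq : B ^ 2 = (A - (1 / ((a : ℝ) + 1)) • 1) ^ 2)
    (i : ℕ) (hi1 : 1 ≤ i) (hia : i ≤ a) :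
    B ⟨p ^ i, Nat.mem_divisors.mpr ⟨pow_dvd_pow p hia, pow_ne_zero a hp.ne_zero⟩⟩
        ⟨p ^ i, Nat.mem_divisors.mpr ⟨pow_dvd_pow p hia, pow_ne_zero a hp.ne_zero⟩⟩ =
      (2 * (a : ℝ) ^ 2 + 2 * (a : ℝ) + 1) /
          ((a : ℝ) * ((a : ℝ) + 1) * Real.sqrt (4 * (a : ℝ) + 1)) +
        ((a : ℝ) - 1) / ((a : ℝ) * ((a : ℝ) + 1)) := by
  have h1 : (1 : ℕ) ∈ (p ^ a).divisors := one_mem_pp hp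
  have haR1 : (1 : ℝ) ≤ (a : ℝ) := by exact_mod_cast ha
  have hs0 : 0 < Real.sqrt (4 * (a : ℝ) + 1) := Real.sqrt_pos.mpr (by linarith)
  have hs2 : Real.sqrt (4 * (a : ℝ) + 1) ^ 2 = 4 * (a : ℝ) + 1 :=
    Real.sq_sqrt (by linarith)
  obtain ⟨hNps, hNsq⟩ := mtAux_psd_and_sq p a hp ha ((a : ℝ))
    (Real.sqrt (4 * (a : ℝ) + 1)) _ _ _ _ rfl hs0 hs2 rfl rfl rfl rfl
  have hM : MtAux p a (1 - 1 / ((a : ℝ) + 1)) 1 (-(1 / ((a : ℝ) + 1))) 0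
      = A - (1 / ((a : ℝ) + 1)) • 1 := by
    ext u v
    simp only [Matrix.sub_apply, Matrix.smul_apply, Matrix.one_apply, hA,
      smul_eq_mul, MtAux]
    by_cases hu : u.1 = 1 <;> by_cases hv : v.1 = 1
    · have huv : u = v := Subtype.ext (hu.trans hv.symm)
      simp [hu, hv, huv]
    · have huv : u ≠ v := fun h => hv (h ▸ hu)
      simp [hu, hv, huv, Nat.gcd_one_left]
    · have huv : u ≠ v := fun h => hu (h.symm ▸ hv)
      simp [hu, hv, huv, Nat.gcd_one_right]
    · have hg : Nat.gcd u.1 v.1 ≠ 1 := gcd_ne_one_pp hp u.2 v.2 hu hv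
      by_cases huv : u = v
      · simp [hu, hv, huv, hg]
      · simp [hu, hv, huv, hg]
  rw [hM] at hNsq
  have hBN := (open scoped MatrixOrder in (CFC.sq_eq_sq_iff _ _ hNps.nonneg hB.nonneg).mp (hNsq.trans hBsq.symm))
  rw [← hBN]
  have hne : (p ^ i : ℕ) ≠ 1 := (Nat.one_lt_pow (by omega) hp.one_lt).ne'
  have hi0 : i ≠ 0 := by omega
  simp [MtAux, hne, hp.ne_one, hi0]
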